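/- arXiv:1001.4511 — 4 statements merged into one kernel-verified Lean document; each statement's English description precedes it below -/
import Mathlib

section
/- Let p be a complex polynomial of degree d ≥ 2. Then there exists c ∈ ℂ such that for all n ≥ 1, the sum of (p^n)'(z) over all fixed points z of p^n, each counted according to its multiplicity as a root of the polynomial p^{∘n}(X) − X, equals d^n(d^n − 1) + c^n. -/
set_option linter.unusedSectionVars false
set_option maxHeartbeats 1000000

open Polynomial in
noncomputable def Psi (h : Polynomial ℂ) : ℂ :=
  (h.roots.map fun z => h.derivative.eval z).sum

section Aux
open Polynomial

private lemma card_roots_eq (h : Polynomial ℂ) : Multiset.card h.roots = h.natDegree :=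
  (Polynomial.splits_iff_card_roots).mp (IsAlgClosed.splits h)

/-- Residue-style lemma: sum of `g` over a root multiset, for `deg g < card R`. -/
private lemma sum_eval_eq_coeff_mod (R : Multiset ℂ) :
    ∀ g : Polynomial ℂ, g.degree < (Multiset.card R : ℕ) →
    (R.map fun z => g.eval z).sum
      = ((g * (derivative ((R.map fun a => X - C a).prod))) %ₘ
          ((R.map fun a => X - C a).prod)).coeff (Multiset.card R - 1) := by
  induction R using Multiset.induction_on with
  | empty =>
      intro g hg
      have hg0 : g = 0 := degree_eq_bot.mp (Nat.WithBot.lt_zero_iff.mp (by simpa using hg))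
      simp [hg0]
  | cons a R ih =>
      intro G hG
      set D := Multiset.card R with hD
      set h : Polynomial ℂ := (R.map fun a => X - C a).prod with hh
      have hmono : h.Monic :=
        monic_multiset_prod_of_monic _ _ (fun i _ => monic_X_sub_C i)
      have hdegh : h.natDegree = D := by
        rw [hh, natDegree_multiset_prod_X_sub_C_eq_card]
      have hdegh' : h.degree = (D : ℕ) := by
        rw [degree_eq_natDegree hmono.ne_zero, hdegh]
      -- split G
      set c : ℂ := G.coeff D with hc
      set g : Polynomial ℂ := G - C c * h with hgdef
      have hgdeg : g.degree < (D : ℕ) := by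
        rw [degree_lt_iff_coeff_zero]
        intro m hm
        rcases eq_or_lt_of_le hm with hm' | hm'
        · have h1 : h.coeff m = 1 := by rw [← hm', ← hdegh]; exact hmono.coeff_natDegree
          have h2 : G.coeff m = c := by rw [← hm', hc]
          simp [hgdef, h1, h2]
        · have h1 : G.coeff m = 0 := by
            apply coeff_eq_zero_of_degree_lt
            refine lt_of_lt_of_le hG ?_
            simp only [Multiset.card_cons, ← hD]
            exact_mod_cast hm'
          have h2 : h.coeff m = 0 :=
            coeff_eq_zero_of_natDegree_lt (by omega)
          simp [hgdef, h1, h2]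
      have ihg := ih g hgdeg
      set r : Polynomial ℂ := (g * derivative h) %ₘ h with hr
      set E : Polynomial ℂ := (g * derivative h) /ₘ h with hE
      have hdiv : r + h * E = g * derivative h := modByMonic_add_div _ h
      have hrdeg : r.degree < h.degree := degree_modByMonic_lt _ hmono
      -- the big polynomial H
      have hprod : ((a ::ₘ R).map fun a => X - C a).prod = (X - C a) * h := by
        rw [Multiset.map_cons, Multiset.prod_cons]
      have hHmono : ((X - C a) * h).Monic := (monic_X_sub_C a).mul hmono
      have hHderiv : derivative ((X - C a) * h) = h + (X - C a) * derivative h := by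
        rw [derivative_mul]; simp
      obtain ⟨G₁, hG₁⟩ : (X - C a) ∣ (G - C (G.eval a)) := X_sub_C_dvd_sub_C_eval
      -- remainder candidate
      have hkey : (C (G.eval a) * h + (X - C a) * r) + ((X - C a) * h) * (G₁ + E + C c * derivative h)
          = G * derivative ((X - C a) * h) := by
        rw [hHderiv]
        have hgexp : g = G - C c * h := hgdef
        linear_combination (X - C a) * hdiv + (X - C a) * derivative h * hgexp - h * hG₁
      have hdegH : ((X - C a) * h).degree = ((D + 1 : ℕ) : WithBot ℕ) := by
        rw [degree_mul, degree_X_sub_C, hdegh']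
        norm_cast; omega
      have hrem : degree (C (G.eval a) * h + (X - C a) * r) < ((X - C a) * h).degree := by
        rw [hdegH]
        apply lt_of_le_of_lt (degree_add_le _ _)
        apply max_lt
        · apply lt_of_le_of_lt (degree_mul_le _ _)
          apply lt_of_le_of_lt (add_le_add degree_C_le le_rfl)
          rw [zero_add, hdegh']
          exact_mod_cast by omega
        · rw [degree_mul, degree_X_sub_C]
          calc (1 : WithBot ℕ) + r.degree < 1 + h.degree := by
                exact WithBot.add_lt_add_left (by simp) hrdeg
            _ = ((D + 1 : ℕ) : WithBot ℕ) := by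
                rw [hdegh', ← Nat.cast_one, ← Nat.cast_add, add_comm]
      have hmod : (G * derivative ((X - C a) * h)) %ₘ ((X - C a) * h)
          = C (G.eval a) * h + (X - C a) * r :=
        (div_modByMonic_unique _ _ hHmono ⟨hkey, hrem⟩).2
      -- LHS
      have hmapeq : (R.map fun z => G.eval z) = R.map fun z => g.eval z := by
        refine Multiset.map_congr rfl (fun z hz => ?_)
        have hz0 : h.eval z = 0 := by
          rw [hh, eval_multiset_prod, Multiset.map_map]
          exact Multiset.prod_eq_zero (Multiset.mem_map.mpr ⟨z, hz, by simp⟩)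
        simp [hgdef, hz0]
      rw [hprod, hmod, Multiset.map_cons, Multiset.sum_cons, hmapeq, ihg]
      -- coefficient computation
      have hcard : Multiset.card (a ::ₘ R) - 1 = D := by simp [Multiset.card_cons, hD]
      rw [hcard]
      rcases Nat.eq_zero_or_pos D with hD0 | hDpos
      · have hr0 : r = 0 := by
          have : r.degree < 0 := by
            rw [hdegh', hD0] at hrdeg; exact_mod_cast hrdeg
          exact degree_eq_bot.mp (Nat.WithBot.lt_zero_iff.mp (by simpa using this))
        have hh1 : h.coeff D = 1 := by rw [← hdegh]; exact hmono.coeff_natDegree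
        rw [hD0] at hh1
        simp [hr0, hD0, coeff_C_mul, hh1]
      · have hh1 : h.coeff D = 1 := by rw [← hdegh]; exact hmono.coeff_natDegree
        have hXr : ((X - C a) * r).coeff D = r.coeff (D - 1) := by
          have hD1 : D = (D - 1) + 1 := by omega
          have hrD : r.coeff D = 0 := by
            apply coeff_eq_zero_of_degree_lt
            rw [hdegh'] at hrdeg; exact hrdeg
          rw [sub_mul, coeff_sub, hD1, coeff_X_mul, ← hD1, coeff_C_mul, hrD]
          ring
        rw [coeff_add, coeff_C_mul, hh1, hXr]
        ring


private lemma degree_lt_cast {w : Polynomial ℂ} {n : ℕ} (hw : w.natDegree < n) :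
    w.degree < (n : ℕ) :=
  lt_of_le_of_lt degree_le_natDegree (by exact_mod_cast hw)

section
variable {h g : Polynomial ℂ}

private lemma sum_roots_eval (hm : h.Monic) (hg : g.degree < h.degree) :
    (h.roots.map fun z => g.eval z).sum = ((g * derivative h) %ₘ h).coeff (h.natDegree - 1) := by
  have hcard := card_roots_eq h
  have hfact := prod_multiset_X_sub_C_of_monic_of_roots_card_eq hm hcard
  have := sum_eval_eq_coeff_mod h.roots g
    (by rw [hcard, ← degree_eq_natDegree hm.ne_zero]; exact hg)
  rwa [hfact, hcard] at this

private lemma Psi_eq_coeff_mod (hm : h.Monic) :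
    Psi h = ((derivative h * derivative h) %ₘ h).coeff (h.natDegree - 1) :=
  sum_roots_eval hm (degree_derivative_lt hm.ne_zero)

private lemma deriv_coeff (hm : h.Monic) (hd : 1 ≤ h.natDegree) :
    (derivative h).coeff (h.natDegree - 1) = (h.natDegree : ℂ) ∧
    (derivative h).natDegree = h.natDegree - 1 ∧ derivative h ≠ 0 := by
  set D := h.natDegree with hD
  have hsucc : D - 1 + 1 = D := by omega
  have h1 : (derivative h).coeff (D - 1) = (D : ℂ) := by
    rw [coeff_derivative, hsucc, hm.coeff_natDegree, one_mul]
    exact_mod_cast congrArg (fun n : ℕ => (n : ℂ)) hsucc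
  have hDne : (D : ℂ) ≠ 0 := Nat.cast_ne_zero.mpr (by omega)
  have hne : derivative h ≠ 0 := fun h0 => hDne (by rw [← h1, h0, coeff_zero])
  refine ⟨h1, le_antisymm ?_ (le_natDegree_of_ne_zero (h1 ▸ hDne)), hne⟩
  have := natDegree_derivative_lt (p := h) (by omega)
  omega

private lemma h_ne_one (hd : 2 ≤ h.natDegree) : h ≠ 1 := by
  rintro rfl; simp at hd

/-- M3: subtracting a constant does not change `Psi`. -/
private lemma Psi_sub_C (hm : h.Monic) (hd : 2 ≤ h.natDegree) (u : ℂ) :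
    Psi (h - C u) = Psi h := by
  set D := h.natDegree with hD
  obtain ⟨hdc, hdn, hdz⟩ := deriv_coeff hm (by omega)
  have hdegCu : (C u).degree < h.degree := by
    apply lt_of_le_of_lt degree_C_le
    rw [degree_eq_natDegree hm.ne_zero]
    exact_mod_cast by omega
  have hqm : (h - C u).Monic := by
    have := hm.add_of_left (q := -C u) (by simpa using hdegCu)
    simpa [sub_eq_add_neg] using this
  have hqdeg : (h - C u).degree = h.degree := degree_sub_eq_left_of_degree_lt hdegCu
  have hqnat : (h - C u).natDegree = D := natDegree_eq_of_degree_eq hqdeg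
  have hqd : derivative (h - C u) = derivative h := by simp
  set E : Polynomial ℂ := (derivative h * derivative h) /ₘ h with hE
  set r : Polynomial ℂ := (derivative h * derivative h) %ₘ h with hr
  have hdiv : r + h * E = derivative h * derivative h := modByMonic_add_div _ h
  have hrnat : r.natDegree < D := natDegree_modByMonic_lt _ hm (h_ne_one hd)
  have hEnat : E.natDegree ≤ D - 2 := by
    rw [hE, natDegree_divByMonic _ hm]
    have : (derivative h * derivative h).natDegree ≤ (D - 1) + (D - 1) :=
      natDegree_mul_le.trans (by omega)
    omega
  have hkey : (r + C u * E) + (h - C u) * E = derivative (h - C u) * derivative (h - C u) := by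
    rw [hqd]; linear_combination hdiv
  have hrem : (r + C u * E).degree < (h - C u).degree := by
    rw [hqdeg, degree_eq_natDegree hm.ne_zero]
    apply degree_lt_cast
    apply lt_of_le_of_lt (natDegree_add_le _ _)
    apply max_lt hrnat
    apply lt_of_le_of_lt natDegree_mul_le
    simp only [natDegree_C]
    omega
  have hmod : (derivative (h - C u) * derivative (h - C u)) %ₘ (h - C u) = r + C u * E :=
    (div_modByMonic_unique _ _ hqm ⟨hkey, hrem⟩).2
  rw [Psi_eq_coeff_mod hqm, hmod, hqnat, Psi_eq_coeff_mod hm, ← hD, ← hr]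
  have hE0 : E.coeff (D - 1) = 0 := coeff_eq_zero_of_natDegree_lt (by omega)
  simp [hE0]

/-- M4: subtracting `s • X` shifts `Psi` by `s * (D^2 - 2D)`. -/
private lemma Psi_sub_CX (hm : h.Monic) (hd : 2 ≤ h.natDegree) (s : ℂ) :
    Psi (h - C s * X) = Psi h + s * ((h.natDegree : ℂ)^2 - 2 * (h.natDegree : ℂ)) := by
  set D := h.natDegree with hD
  obtain ⟨hdc, hdn, hdz⟩ := deriv_coeff hm (by omega)
  have hdegCX : (C s * X).degree < h.degree := by
    rw [degree_eq_natDegree hm.ne_zero]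
    apply lt_of_le_of_lt (degree_mul_le _ _)
    apply lt_of_le_of_lt (add_le_add degree_C_le degree_X_le)
    rw [zero_add]
    exact_mod_cast by omega
  have hqm : (h - C s * X).Monic := by
    have := hm.add_of_left (q := -(C s * X)) (by simpa using hdegCX)
    simpa [sub_eq_add_neg] using this
  have hqdeg : (h - C s * X).degree = h.degree := degree_sub_eq_left_of_degree_lt hdegCX
  have hqnat : (h - C s * X).natDegree = D := natDegree_eq_of_degree_eq hqdeg
  have hqd : derivative (h - C s * X) = derivative h - C s := by simp
  set E : Polynomial ℂ := (derivative h * derivative h) /ₘ h with hE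
  set r : Polynomial ℂ := (derivative h * derivative h) %ₘ h with hr
  have hdiv : r + h * E = derivative h * derivative h := modByMonic_add_div _ h
  have hrnat : r.natDegree < D := natDegree_modByMonic_lt _ hm (h_ne_one hd)
  have hrdeg : r.degree < h.degree := degree_modByMonic_lt _ hm
  have hd2nat : (derivative h * derivative h).natDegree = 2 * D - 2 := by
    rw [natDegree_mul hdz hdz, hdn]; omega
  have hEnat : E.natDegree = D - 2 := by
    rw [hE, natDegree_divByMonic _ hm, hd2nat, ← hD]; omega
  have hElead : E.coeff (D - 2) = (D : ℂ)^2 := by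
    have hdd : (derivative h * derivative h).coeff (2 * D - 2) = (D : ℂ)^2 := by
      have hld : (derivative h).leadingCoeff = (D : ℂ) := by
        rw [← coeff_natDegree, hdn, hdc]
      have hl : (derivative h * derivative h).leadingCoeff = (D : ℂ)^2 := by
        rw [leadingCoeff_mul, hld]; ring
      rw [← hd2nat]; exact hl
    have hr2 : r.coeff (2 * D - 2) = 0 :=
      coeff_eq_zero_of_natDegree_lt (by omega)
    have hhE : (h * E).coeff (2 * D - 2) = (D : ℂ)^2 := by
      have hco := congrArg (fun q => q.coeff (2 * D - 2)) hdiv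
      simp only [coeff_add, hr2, zero_add] at hco
      rw [hco, hdd]
    have hEne : E ≠ 0 := by
      intro h0
      rw [h0, mul_zero, coeff_zero] at hhE
      have : (D : ℂ) ≠ 0 := Nat.cast_ne_zero.mpr (by omega)
      exact this (pow_eq_zero_iff (two_ne_zero) |>.mp hhE.symm)
    have hnat : (h * E).natDegree = 2 * D - 2 := by
      rw [natDegree_mul hm.ne_zero hEne, hEnat, ← hD]; omega
    have heq2 : (h * E).coeff (2 * D - 2) = E.coeff (D - 2) :=
      calc (h * E).coeff (2 * D - 2) = (h * E).leadingCoeff := by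
            rw [← hnat]; exact coeff_natDegree
        _ = E.leadingCoeff := by rw [leadingCoeff_mul, hm.leadingCoeff, one_mul]
        _ = E.coeff (D - 2) := by rw [← hEnat]; exact coeff_natDegree.symm
    rw [← heq2, hhE]
  have hkey : (C s * (X * E) + r - C (2 * s) * derivative h + C (s * s))
        + (h - C s * X) * E
      = derivative (h - C s * X) * derivative (h - C s * X) := by
    rw [hqd]
    have hCss : C (s * s) = C s * C s := by rw [C_mul]
    have hC2s : C (2 * s) = 2 * C s := by
      rw [C_mul, map_ofNat]
    rw [hCss, hC2s]
    linear_combination hdiv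
  have hrem : (C s * (X * E) + r - C (2 * s) * derivative h + C (s * s)).degree
      < (h - C s * X).degree := by
    rw [hqdeg, degree_eq_natDegree hm.ne_zero]
    apply degree_lt_cast
    apply lt_of_le_of_lt (natDegree_add_le _ _)
    apply max_lt _ (by rw [natDegree_C]; omega)
    apply lt_of_le_of_lt (natDegree_sub_le _ _)
    apply max_lt
    · apply lt_of_le_of_lt (natDegree_add_le _ _)
      apply max_lt _ hrnat
      apply lt_of_le_of_lt natDegree_mul_le
      have : (X * E).natDegree ≤ 1 + (D - 2) :=
        natDegree_mul_le.trans (add_le_add natDegree_X_le (le_of_eq hEnat))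
      simp only [natDegree_C]
      omega
    · apply lt_of_le_of_lt natDegree_mul_le
      simp only [natDegree_C]
      omega
  have hmod : (derivative (h - C s * X) * derivative (h - C s * X)) %ₘ (h - C s * X)
      = C s * (X * E) + r - C (2 * s) * derivative h + C (s * s) :=
    (div_modByMonic_unique _ _ hqm ⟨hkey, hrem⟩).2
  rw [Psi_eq_coeff_mod hqm, hmod, hqnat, Psi_eq_coeff_mod hm, ← hD, ← hr]
  have hXE : (X * E).coeff (D - 1) = (D : ℂ)^2 := by
    have hsucc : D - 1 = (D - 2) + 1 := by omega
    rw [hsucc, coeff_X_mul, hElead]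
  have hCss0 : (C (s * s)).coeff (D - 1) = 0 := by
    rw [coeff_C, if_neg (by omega)]
  rw [coeff_add, coeff_sub, coeff_add, coeff_C_mul, coeff_C_mul, hXE, hdc, hCss0]
  push_cast
  ring
end
end Aux

/-- The `n`-fold composition `p^{∘n}` of a polynomial with itself
(`p^{∘0} = X`). -/
noncomputable def polyIter (p : Polynomial ℂ) : ℕ → Polynomial ℂ
  | 0 => Polynomial.X
  | n + 1 => (polyIter p n).comp p

section Aux2
open Polynomial

section
variable {p : Polynomial ℂ} (hp : 2 ≤ p.natDegree)

private lemma scaling (b : ℂ) (hb : b ≠ 0) (h : Polynomial ℂ) :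
    Psi (C b * h) = b * Psi h := by
  unfold Psi
  rw [roots_C_mul _ hb, derivative_C_mul]
  rw [show (fun z => (C b * derivative h).eval z) = fun z => b * (derivative h).eval z by
    funext z; simp]
  exact Multiset.sum_map_mul_left

include hp

private lemma p_ne_zero : p ≠ 0 := fun h0 => by simp [h0] at hp

private lemma fiber_sum (u : ℂ) :
    ((p - C u).roots.map fun z => p.derivative.eval z).sum
      = p.leadingCoeff * Psi (C p.leadingCoeff⁻¹ * p) := by
  set A := p.leadingCoeff with hA
  have hA0 : A ≠ 0 := leadingCoeff_ne_zero.mpr (p_ne_zero hp)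
  set pt : Polynomial ℂ := C A⁻¹ * p with hpt
  have hptm : pt.Monic := by
    rw [hpt, mul_comm]; exact monic_mul_leadingCoeff_inv (p_ne_zero hp)
  have hptnat : pt.natDegree = p.natDegree := by
    rw [hpt, natDegree_C_mul (inv_ne_zero hA0)]
  have hfac : C A * (pt - C (A⁻¹ * u)) = p - C u := by
    rw [hpt, mul_sub, ← mul_assoc, ← C_mul, mul_inv_cancel₀ hA0, C_1, one_mul, ← C_mul,
      ← mul_assoc, mul_inv_cancel₀ hA0, one_mul]
  have hroots : (p - C u).roots = (pt - C (A⁻¹ * u)).roots := by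
    rw [← hfac, roots_C_mul _ hA0]
  have hder : p.derivative = C A * (pt - C (A⁻¹ * u)).derivative := by
    have : derivative (C A * (pt - C (A⁻¹ * u))) = C A * (pt - C (A⁻¹ * u)).derivative :=
      derivative_C_mul _ _
    rw [← this, hfac]
    simp
  rw [hroots]
  rw [show (fun z => p.derivative.eval z)
      = fun z => A * ((pt - C (A⁻¹ * u)).derivative.eval z) by
    funext z; rw [hder]; simp]
  rw [Multiset.sum_map_mul_left]
  congr 1
  exact Psi_sub_C hptm (by omega) _

/-- Multiplicativity: `Psi (g ∘ p) = c * Psi g`. -/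
private lemma Psi_comp (g : Polynomial ℂ) (hg : g ≠ 0) :
    Psi (g.comp p) = (p.leadingCoeff * Psi (C p.leadingCoeff⁻¹ * p)) * Psi g := by
  set c := p.leadingCoeff * Psi (C p.leadingCoeff⁻¹ * p) with hc
  set B := g.leadingCoeff with hB
  have hB0 : B ≠ 0 := leadingCoeff_ne_zero.mpr hg
  have hfac := C_leadingCoeff_mul_prod_multiset_X_sub_C (card_roots_eq g)
  have hcomp : g.comp p = C B * ((g.roots.map fun u => p - C u).prod) := by
    conv_lhs => rw [← hfac]
    rw [mul_comp, C_comp, multiset_prod_comp, Multiset.map_map]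
    congr 1
    apply congrArg
    apply Multiset.map_congr rfl
    intro u _
    simp [sub_comp]
  have hpu_ne : ∀ u : ℂ, p - C u ≠ 0 := by
    intro u h0
    have : p = C u := by linear_combination (norm := ring_nf) h0
    rw [this, natDegree_C] at hp; omega
  have hroots : (g.comp p).roots = g.roots.bind fun u => (p - C u).roots := by
    rw [hcomp, roots_C_mul _ hB0, roots_multiset_prod]
    · rw [Multiset.bind_map]
    · rw [Multiset.mem_map]
      rintro ⟨u, _, hu0⟩
      exact hpu_ne u hu0
  have hder : derivative (g.comp p) = derivative p * (derivative g).comp p :=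
    derivative_comp g p
  unfold Psi
  rw [hroots, hder, Multiset.map_bind, Multiset.sum_bind]
  have hinner : ∀ u ∈ g.roots,
      (((p - C u).roots.map fun z => (derivative p * (derivative g).comp p).eval z)).sum
        = (derivative g).eval u * c := by
    intro u hu
    have : ((p - C u).roots.map fun z => (derivative p * (derivative g).comp p).eval z)
        = ((p - C u).roots.map fun z => (derivative g).eval u * (derivative p).eval z) := by
      apply Multiset.map_congr rfl
      intro z hz
      have hpz : p.eval z = u := by
        have h0 := (mem_roots (hpu_ne u)).mp hz
        simp only [IsRoot.def, eval_sub, eval_C] at h0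
        linear_combination h0
      simp [eval_comp, hpz, mul_comm]
    rw [this, Multiset.sum_map_mul_left, fiber_sum hp u, ← hc]
  rw [Multiset.map_congr rfl hinner]
  rw [show (fun u => (derivative g).eval u * c) = fun u => c * (derivative g).eval u by
    funext u; ring]
  exact Multiset.sum_map_mul_left
end


section
variable {p : Polynomial ℂ} (hp : 2 ≤ p.natDegree)

private lemma polyIter_natDegree (n : ℕ) : (polyIter p n).natDegree = p.natDegree ^ n := by
  induction n with
  | zero => simp [polyIter]
  | succ n ih => rw [polyIter, natDegree_comp, ih, pow_succ]

include hp
private lemma polyIter_ne_zero (n : ℕ) : polyIter p n ≠ 0 := by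
  intro h0
  have := polyIter_natDegree (p := p) n
  rw [h0, natDegree_zero] at this
  have := this.symm
  have : p.natDegree ^ n ≠ 0 := pow_ne_zero _ (by omega)
  omega

private lemma polyIter_deriv (n : ℕ) (z : ℂ) :
    (derivative (polyIter p n)).eval z
      = ∏ k ∈ Finset.range n, p.derivative.eval ((fun w => p.eval w)^[k] z) := by
  induction n generalizing z with
  | zero => simp [polyIter]
  | succ n ih =>
      rw [polyIter, derivative_comp, eval_mul, eval_comp, ih (p.eval z),
        Finset.prod_range_succ', mul_comm]
      have : ∀ k, (fun w => p.eval w)^[k + 1] z = (fun w => p.eval w)^[k] (p.eval z) :=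
        fun k => Function.iterate_succ_apply _ k z
      simp only [this, Function.iterate_zero_apply]

private lemma Psi_polyIter (n : ℕ) :
    Psi (polyIter p n) = (p.leadingCoeff * Psi (C p.leadingCoeff⁻¹ * p)) ^ n := by
  induction n with
  | zero =>
      rw [pow_zero]
      unfold Psi polyIter
      rw [roots_X]
      simp
  | succ n ih =>
      rw [polyIter, Psi_comp hp _ (polyIter_ne_zero hp n), ih, pow_succ]
      ring
end

end Aux2

open Polynomial in
theorem stmt_8 (p : Polynomial ℂ) (hp : 2 ≤ p.natDegree) :
    ∃ c : ℂ, ∀ n : ℕ, 1 ≤ n →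
      ((polyIter p n - Polynomial.X).roots.map
        (fun z => ∏ k ∈ Finset.range n,
          p.derivative.eval ((fun w => p.eval w)^[k] z))).sum
      = (p.natDegree : ℂ) ^ n * ((p.natDegree : ℂ) ^ n - 1) + c ^ n := by
  refine ⟨p.leadingCoeff * Psi (C p.leadingCoeff⁻¹ * p), fun n hn => ?_⟩
  set c := p.leadingCoeff * Psi (C p.leadingCoeff⁻¹ * p) with hc
  set f := polyIter p n with hf
  set D := p.natDegree ^ n with hD
  have hfnat : f.natDegree = D := polyIter_natDegree n
  have hD2 : 2 ≤ D := le_trans hp (Nat.le_self_pow (by omega) _)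
  have hf0 : f ≠ 0 := polyIter_ne_zero hp n
  set A := f.leadingCoeff with hA
  have hA0 : A ≠ 0 := leadingCoeff_ne_zero.mpr hf0
  -- the sum over roots
  have hfun : (fun z : ℂ => ∏ k ∈ Finset.range n,
      p.derivative.eval ((fun w => p.eval w)^[k] z)) = fun z => (derivative f).eval z := by
    funext z; rw [polyIter_deriv hp n z]
  rw [hfun]
  set q : Polynomial ℂ := f - X with hq
  have hdegX : (X : Polynomial ℂ).degree < f.degree := by
    rw [degree_eq_natDegree hf0, degree_X, hfnat]
    exact_mod_cast by omega
  have hqdeg : q.degree = f.degree := degree_sub_eq_left_of_degree_lt hdegX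
  have hqnat : q.natDegree = D := by rw [natDegree_eq_of_degree_eq hqdeg, hfnat]
  have hq0 : q ≠ 0 := by
    intro h0
    rw [h0, natDegree_zero] at hqnat; omega
  have hcard : Multiset.card q.roots = D := by rw [card_roots_eq q, hqnat]
  -- derivative split
  have hsplit : (fun z : ℂ => (derivative f).eval z)
      = fun z => (derivative q).eval z + 1 := by
    funext z
    rw [hq]
    simp
  rw [hsplit, Multiset.sum_map_add]
  have hone : (q.roots.map fun _ : ℂ => (1 : ℂ)).sum = (D : ℂ) := by
    rw [Multiset.map_const', Multiset.sum_replicate, hcard]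
    simp
  rw [hone]
  -- Psi q via scaling and M4
  have hPsiq : (q.roots.map fun z => (derivative q).eval z).sum = Psi q := rfl
  set ft : Polynomial ℂ := C A⁻¹ * f with hft
  have hftm : ft.Monic := by rw [hft, mul_comm]; exact monic_mul_leadingCoeff_inv hf0
  have hftnat : ft.natDegree = D := by rw [hft, natDegree_C_mul (inv_ne_zero hA0), hfnat]
  have hfacq : C A * (ft - C A⁻¹ * X) = q := by
    rw [hft, mul_sub, ← mul_assoc, ← C_mul, mul_inv_cancel₀ hA0, C_1, one_mul, ← mul_assoc,
      ← C_mul, mul_inv_cancel₀ hA0, C_1, one_mul]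
  have hPsiq2 : Psi q = Psi f + ((D : ℂ)^2 - 2 * (D : ℂ)) := by
    rw [← hfacq, scaling _ hA0, Psi_sub_CX hftm (by omega) A⁻¹, hftnat]
    have hfacf : C A * ft = f := by
      rw [hft, ← mul_assoc, ← C_mul, mul_inv_cancel₀ hA0, C_1, one_mul]
    rw [mul_add, ← scaling _ hA0 ft, hfacf, ← mul_assoc, mul_inv_cancel₀ hA0, one_mul]
  have hPsif : Psi f = c ^ n := Psi_polyIter hp n
  rw [hPsiq, hPsiq2, hPsif]
  have hcast : ((D : ℕ) : ℂ) = (p.natDegree : ℂ) ^ n := by rw [hD]; push_cast; ring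
  rw [hcast]
  ring
end

section
/- Let p be a complex polynomial of degree 2 such that |p'(ξ)| < 2 for every fixed point ξ of p. Then p² has a fixed point ξ satisfying |(p²)'(ξ)| > 4; that is, there exists ξ ∈ ℂ with p(p(ξ)) = ξ and |p'(p(ξ)) · p'(ξ)| > 4. -/
open Polynomial Complex

theorem stmt_10 (p : Polynomial ℂ) (hp : p.natDegree = 2)
    (h : ∀ ξ : ℂ, p.eval ξ = ξ → ‖p.derivative.eval ξ‖ < 2) :
    ∃ ξ : ℂ, p.eval (p.eval ξ) = ξ ∧
      4 < ‖p.derivative.eval (p.eval ξ) * p.derivative.eval ξ‖ := by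
  set a := p.coeff 2 with ha'
  set b := p.coeff 1 with hb'
  set d := p.coeff 0 with hd'
  have hne : p ≠ 0 := by intro h0; simp [h0] at hp
  have ha : a ≠ 0 := by
    have := Polynomial.leadingCoeff_ne_zero.mpr hne
    rwa [Polynomial.leadingCoeff, hp] at this
  have hpeq : p = C a * X ^ 2 + C b * X + C d := by
    ext n
    match n with
    | 0 => simp [hd']
    | 1 => simp [hb']
    | 2 => simp [ha']
    | (n+3) =>
      rw [Polynomial.coeff_eq_zero_of_natDegree_lt (by omega : p.natDegree < n + 3)]
      simp [Polynomial.coeff_X_pow]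
  have hev : ∀ z : ℂ, p.eval z = a * z ^ 2 + b * z + d := by
    intro z; rw [hpeq]; simp
  have hdev : ∀ z : ℂ, p.derivative.eval z = 2 * a * z + b := by
    intro z
    rw [hpeq]
    simp [Polynomial.derivative_C_mul]
    ring
  obtain ⟨t, ht⟩ := IsAlgClosed.exists_pow_nat_eq ((b - 1) ^ 2 - 4 * a * d) (n := 2) (by norm_num)
  -- fixed points
  have hfix : ∀ u : ℂ, u ^ 2 = (b - 1) ^ 2 - 4 * a * d →
      ‖1 + u‖ < 2 := by
    intro u hu
    set α : ℂ := (1 - b + u) / (2 * a) with hα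
    have key : 2 * a * α = 1 - b + u := by
      rw [hα]; field_simp
    have h0 : 4 * a * (a * α ^ 2 + (b - 1) * α + d) = 0 := by
      linear_combination (2 * a * α + (1 - b + u) + 2 * (b - 1)) * key + hu
    have hroot : a * α ^ 2 + (b - 1) * α + d = 0 := by
      rcases mul_eq_zero.mp h0 with h4 | h'
      · exact absurd h4 (by simp [ha])
      · exact h'
    have hev' : p.eval α = α := by
      rw [hev]; linear_combination hroot
    have := h _ hev'
    rw [hdev] at this
    rwa [(by linear_combination key : 2 * a * α + b = 1 + u)] at this
  have h1 : ‖1 + t‖ < 2 := hfix t ht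
  have h2 : ‖1 - t‖ < 2 := by
    have := hfix (-t) (by linear_combination ht)
    rwa [(by ring : (1 : ℂ) + -t = 1 - t)] at this
  -- period-2 point
  obtain ⟨s, hs⟩ := IsAlgClosed.exists_pow_nat_eq ((a * (b + 1)) ^ 2 - 4 * a ^ 2 * (a * d + b + 1)) (n := 2) (by norm_num)
  set γ : ℂ := (s - a * (b + 1)) / (2 * a ^ 2) with hγ
  have key2 : 2 * a ^ 2 * γ = s - a * (b + 1) := by
    rw [hγ]; field_simp
  have h0' : 4 * a ^ 2 * (a ^ 2 * γ ^ 2 + a * (b + 1) * γ + (a * d + b + 1)) = 0 := by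
    linear_combination (2 * a ^ 2 * γ + (s - a * (b + 1)) + 2 * a * (b + 1)) * key2 + hs
  have hq : a ^ 2 * γ ^ 2 + a * (b + 1) * γ + (a * d + b + 1) = 0 := by
    rcases mul_eq_zero.mp h0' with h4 | h'
    · exact absurd h4 (by simp [ha])
    · exact h'
  refine ⟨γ, ?_, ?_⟩
  · rw [hev, hev]
    linear_combination (a * γ ^ 2 + (b - 1) * γ + d) * hq
  · have hmul : p.derivative.eval (p.eval γ) * p.derivative.eval γ = 5 - t ^ 2 := by
      rw [hev, hdev, hdev]
      linear_combination (4 * a * γ + 2 * b - 4) * hq + ht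
    rw [hmul]
    -- real inequality
    have e1 : (1 + t.re) * (1 + t.re) + t.im * t.im < 4 := by
      have h1' : Complex.normSq (1 + t) < 4 := by
        rw [← Complex.sq_norm]
        nlinarith [norm_nonneg (1 + t)]
      simpa [Complex.normSq_apply] using h1'
    have e2 : (1 - t.re) * (1 - t.re) + t.im * t.im < 4 := by
      have h2' : Complex.normSq (1 - t) < 4 := by
        rw [← Complex.sq_norm]
        nlinarith [norm_nonneg (1 - t)]
      simpa [Complex.normSq_apply] using h2'
    by_contra hc
    push_neg at hc
    have hns : Complex.normSq (5 - t ^ 2) ≤ 16 := by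
      rw [← Complex.sq_norm]
      nlinarith [norm_nonneg (5 - t ^ 2)]
    have hns' : (5 - (t.re * t.re - t.im * t.im)) ^ 2 + (2 * t.re * t.im) ^ 2 ≤ 16 := by
      have heq : Complex.normSq (5 - t ^ 2) =
          (5 - (t.re * t.re - t.im * t.im)) ^ 2 + (2 * t.re * t.im) ^ 2 := by
        simp [Complex.normSq_apply, Complex.sub_re, Complex.sub_im, pow_two,
          Complex.mul_re, Complex.mul_im]
        ring
      rw [heq] at hns
      exact hns
    have hx : t.re * t.re < 1 := by nlinarith
    nlinarith [sq_nonneg (t.re * t.im), sq_nonneg t.im, mul_self_nonneg t.im]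
end

section
/- Let d ≥ 2 be an integer and let c ∈ ℂ satisfy |d(d−1) + c| < 2d. Then Re(c²) > (1/2) d²(d−1)² − 4d². Consequently, if in addition |d²(d²−1) + c²| < 4d², then d = 2. -/
theorem stmt_11 (d : ℕ) (hd : 2 ≤ d) (c : ℂ)
    (h1 : ‖(d : ℂ) * ((d : ℂ) - 1) + c‖ < 2 * d) :
    (1 / 2 : ℝ) * (d : ℝ) ^ 2 * ((d : ℝ) - 1) ^ 2 - 4 * (d : ℝ) ^ 2 < (c ^ 2).re ∧
      (‖(d : ℂ) ^ 2 * ((d : ℂ) ^ 2 - 1) + c ^ 2‖ < 4 * (d : ℝ) ^ 2 →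
        d = 2) := by
  have hdr : (2 : ℝ) ≤ (d : ℝ) := by exact_mod_cast hd
  set x := c.re
  set y := c.im
  have habs := norm_nonneg ((d : ℂ) * ((d : ℂ) - 1) + c)
  have h1sq : (‖(d : ℂ) * ((d : ℂ) - 1) + c‖)^2 < (2 * (d : ℝ))^2 := by
    nlinarith
  rw [Complex.sq_norm, Complex.normSq_apply] at h1sq
  simp only [Complex.add_re, Complex.add_im, Complex.mul_re, Complex.mul_im,
    Complex.sub_re, Complex.sub_im, Complex.natCast_re, Complex.natCast_im,
    Complex.one_re, Complex.one_im] at h1sq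
  have hre : (c ^ 2).re = x * x - y * y := by
    simp [pow_two, Complex.mul_re, x, y]
  have key : (1 / 2 : ℝ) * (d : ℝ) ^ 2 * ((d : ℝ) - 1) ^ 2 - 4 * (d : ℝ) ^ 2 < (c ^ 2).re := by
    rw [hre]
    nlinarith [sq_nonneg (x + (d : ℝ) * ((d : ℝ) - 1) / 2)]
  refine ⟨key, fun h2 => ?_⟩
  have hle := Complex.re_le_norm ((d : ℂ) ^ 2 * ((d : ℂ) ^ 2 - 1) + c ^ 2)
  have hre2 : ((d : ℂ) ^ 2 * ((d : ℂ) ^ 2 - 1) + c ^ 2).re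
      = (d : ℝ) ^ 2 * ((d : ℝ) ^ 2 - 1) + (c ^ 2).re := by
    simp [Complex.add_re, Complex.mul_re, pow_two, Complex.mul_im]
  rw [hre2] at hle
  have hd3 : d < 3 := by
    by_contra h
    push_neg at h
    have h3 : (3 : ℝ) ≤ (d : ℝ) := by exact_mod_cast h
    have h4 : (d : ℝ) ^ 2 * ((d : ℝ) ^ 2 - 1) + (c ^ 2).re < 4 * (d : ℝ) ^ 2 :=
      lt_of_le_of_lt hle h2
    nlinarith [key, h4, sq_nonneg ((d : ℝ) - 3), mul_nonneg (sub_nonneg.mpr h3) (sq_nonneg ((d : ℝ) - 3)), sq_nonneg (d : ℝ)]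
  omega
end

section
/- Let p be a complex polynomial of degree 2. Then for every n ≥ 1, the sum of (p^n)'(z) over all fixed points z of p^n, each counted according to its multiplicity as a root of the polynomial p^{∘n}(X) − X, equals 2^n(2^n − 1). In particular, the sum of p'(ξ) over the fixed points of p (counted with multiplicity) equals 2. -/
open Polynomial

namespace Stmt12Aux

lemma polyIter_zero (p : ℂ[X]) : polyIter p 0 = X := rfl
lemma polyIter_succ (p : ℂ[X]) (n : ℕ) : polyIter p (n + 1) = (polyIter p n).comp p := rfl

lemma polyIter_eval (p : ℂ[X]) (k : ℕ) (z : ℂ) :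
    (polyIter p k).eval z = (fun w => p.eval w)^[k] z := by
  induction k generalizing z with
  | zero => simp [polyIter]
  | succ k ih =>
      rw [polyIter_succ, eval_comp, ih, Function.iterate_succ_apply]

lemma polyIter_deriv_eval (p : ℂ[X]) (n : ℕ) (z : ℂ) :
    (polyIter p n).derivative.eval z
      = ∏ k ∈ Finset.range n, p.derivative.eval ((polyIter p k).eval z) := by
  induction n generalizing z with
  | zero => simp [polyIter]
  | succ n ih =>
      rw [polyIter_succ, derivative_comp, eval_mul, eval_comp, ih,
        Finset.prod_range_succ']
      rw [mul_comm]
      congr 1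
      · apply Finset.prod_congr rfl
        intro k _
        rw [polyIter_succ, eval_comp]
      · simp [polyIter]

lemma polyIter_natDegree (p : ℂ[X]) (hp : p.natDegree = 2) (n : ℕ) :
    (polyIter p n).natDegree = 2 ^ n := by
  induction n with
  | zero => simp [polyIter]
  | succ n ih => rw [polyIter_succ, natDegree_comp, ih, hp, pow_succ]

lemma coeff_comp_neg_X (f : ℂ[X]) (j : ℕ) :
    (f.comp (-X)).coeff j = (-1 : ℂ) ^ j * f.coeff j := by
  induction f using Polynomial.induction_on' with
  | add p q hp hq => simp [add_comp, hp, hq, mul_add]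
  | monomial n a =>
      rw [monomial_comp]
      have h1 : (-X : ℂ[X]) = C (-1) * X := by simp
      rw [h1, mul_pow, ← C_pow, ← mul_assoc, ← C_mul]
      rw [coeff_C_mul, coeff_X_pow, coeff_monomial]
      rcases eq_or_ne n j with rfl | h
      · simp [mul_comm]
      · simp [h, Ne.symm h]


noncomputable def Apoly (s : Multiset ℂ) : ℂ[X] :=
  (s.map (fun r => 1 - C r * X)).prod

noncomputable def psum (s : Multiset ℂ) (k : ℕ) : ℂ :=
  (s.map (fun r => r ^ k)).sum

lemma geom_mul (r : ℂ) :
    ((1 - C r * X : ℂ[X]) : PowerSeries ℂ) * PowerSeries.mk (fun j => r ^ j) = 1 := by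
  have hc : ((1 - C r * X : ℂ[X]) : PowerSeries ℂ)
      = 1 - PowerSeries.C r * PowerSeries.X := by
    rw [← Polynomial.coeToPowerSeries.ringHom_apply, map_sub, map_one, map_mul,
      Polynomial.coeToPowerSeries.ringHom_apply, Polynomial.coeToPowerSeries.ringHom_apply,
      Polynomial.coe_C, Polynomial.coe_X]
  rw [hc, sub_mul, one_mul, mul_assoc]
  ext n
  cases n with
  | zero =>
      simp [PowerSeries.coeff_mk, PowerSeries.coeff_C_mul, PowerSeries.coeff_zero_X_mul]
  | succ n =>
      simp [PowerSeries.coeff_mk, PowerSeries.coeff_C_mul, PowerSeries.coeff_succ_X_mul,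
        pow_succ, PowerSeries.coeff_one, mul_comm]

lemma logderiv (s : Multiset ℂ) :
    ((derivative (Apoly s) : ℂ[X]) : PowerSeries ℂ)
      + (Apoly s : ℂ[X]) *
        (s.map (fun r => PowerSeries.C r * PowerSeries.mk (fun j => r ^ j))).sum = 0 := by
  induction s using Multiset.induction_on with
  | empty => simp [Apoly]
  | cons r s ih =>
      simp only [Apoly, Multiset.map_cons, Multiset.prod_cons, Multiset.sum_cons] at *
      rw [derivative_mul]
      have hd : derivative (1 - C r * X : ℂ[X]) = C (-r) := by
        simp
      rw [hd]
      simp only [Polynomial.coe_add, Polynomial.coe_mul]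
      have hCr : ((C (-r) : ℂ[X]) : PowerSeries ℂ) = -PowerSeries.C r := by
        rw [Polynomial.coe_C, map_neg]
      rw [hCr]
      linear_combination ((1 - C r * X : ℂ[X]) : PowerSeries ℂ) * ih
        + (PowerSeries.C r * ((s.map (fun t => 1 - C t * X)).prod : ℂ[X])) * geom_mul r

lemma newton (s : Multiset ℂ) (k : ℕ) (hk : 1 ≤ k) :
    (k : ℂ) * ((Apoly s).coeff k)
      + ∑ i ∈ Finset.range k, (Apoly s).coeff i * psum s (k - i) = 0 := by
  have h := congrArg (PowerSeries.coeff (k - 1)) (logderiv s)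
  rw [map_add, map_zero] at h
  rw [Polynomial.coeff_coe, coeff_derivative] at h
  rw [PowerSeries.coeff_mul] at h
  have hL : ∀ j : ℕ, (PowerSeries.coeff j)
      ((s.map (fun r => PowerSeries.C r * PowerSeries.mk (fun i => r ^ i))).sum)
      = psum s (j + 1) := by
    intro j
    rw [map_multiset_sum, Multiset.map_map, psum]
    congr 1
    apply Multiset.map_congr rfl
    intro r _
    simp [PowerSeries.coeff_C_mul, PowerSeries.coeff_mk, pow_succ, mul_comm]
  simp only [hL, Polynomial.coeff_coe] at h
  rw [Finset.Nat.sum_antidiagonal_eq_sum_range_succ_mk] at h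
  have hk1 : k - 1 + 1 = k := by omega
  rw [hk1] at h
  have hcast2 : ((k - 1 : ℕ) : ℂ) + 1 = (k : ℂ) := by
    rw [Nat.cast_sub hk]; push_cast; ring
  rw [Nat.succ_eq_add_one, hk1, hcast2] at h
  have h2 : ∑ i ∈ Finset.range k, (Apoly s).coeff (i, k - 1 - i).1 * psum s ((i, k - 1 - i).2 + 1)
      = ∑ i ∈ Finset.range k, (Apoly s).coeff i * psum s (k - i) := by
    apply Finset.sum_congr rfl
    intro i hi
    have hik := Finset.mem_range.mp hi
    have h3 : k - 1 - i + 1 = k - i := by omega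
    simp only [h3]
  rw [h2] at h
  linear_combination h


lemma reverse_X_sub_C (a : ℂ) : (X - C a).reverse = 1 - C a * X := by
  have h1 : (X - C a : ℂ[X]) = X + C (-a) := by rw [map_neg]; ring
  rw [Polynomial.reverse, h1, natDegree_X_add_C]
  rw [reflect_add, reflect_C]
  simp [reflect_one_X]
  ring

lemma reverse_prod_X_sub_C (s : Multiset ℂ) :
    ((s.map (fun a => X - C a)).prod).reverse = Apoly s := by
  induction s using Multiset.induction_on with
  | empty =>
      simp only [Multiset.map_zero, Multiset.prod_zero, Apoly]
      rw [Polynomial.reverse, reflect_one]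
      simp
  | cons a t ih =>
      simp only [Apoly, Multiset.map_cons, Multiset.prod_cons] at *
      rw [reverse_mul_of_domain, ih, reverse_X_sub_C]

lemma multiset_sum_finset_sum (s : Multiset ℂ) (t : Finset ℕ) (g : ℕ → ℂ → ℂ) :
    (s.map (fun r => ∑ j ∈ t, g j r)).sum = ∑ j ∈ t, (s.map (fun r => g j r)).sum := by
  induction s using Multiset.induction_on with
  | empty => simp
  | cons a u ih => simp [ih, Finset.sum_add_distrib]


lemma even_main (f : ℂ[X]) (hev : f.comp (-X) = f) (hD : 2 ≤ f.natDegree) :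
    ((f - X).roots.map (fun r => f.derivative.eval r)).sum
      = (f.natDegree : ℂ) * ((f.natDegree : ℂ) - 1) := by
  set D := f.natDegree with hDdef
  have hf0 : f ≠ 0 := by
    intro h
    rw [h] at hDdef
    simp [D] at hDdef
    omega
  set c := f.leadingCoeff with hc
  have hcne : c ≠ 0 := leadingCoeff_ne_zero.mpr hf0
  have hodd : ∀ j, Odd j → f.coeff j = 0 := by
    intro j hj
    have h1 := coeff_comp_neg_X f j
    rw [hev, Odd.neg_one_pow hj] at h1
    have h2 : (2 : ℂ) * f.coeff j = 0 := by linear_combination h1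
    exact (mul_eq_zero.mp h2).resolve_left two_ne_zero
  have hDeven : Even D := by
    by_contra h
    exact hcne (hodd D (Nat.not_even_iff_odd.mp h))
  set q := f - X with hqdef
  have hqdeg : q.natDegree = D := by
    apply natDegree_sub_eq_left_of_natDegree_lt
    rw [natDegree_X]; omega
  have hq0 : q ≠ 0 := by
    intro h
    rw [h, natDegree_zero] at hqdeg
    omega
  have hqc : ∀ j, j ≠ 1 → q.coeff j = f.coeff j := by
    intro j hj
    simp only [hqdef, coeff_sub, coeff_X]
    rw [if_neg (fun h => hj h.symm)]
    ring
  have hq1 : q.coeff 1 = -1 := by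
    simp [hqdef, coeff_sub, coeff_X, hodd 1 odd_one]
  have hqlc : q.leadingCoeff = c := by
    rw [leadingCoeff, hqdeg, hqc D (by omega), hc, leadingCoeff, hDdef]
  set s := q.roots with hs
  have hcard : Multiset.card s = D := by
    rw [hs, ← hqdeg]
    exact (splits_iff_card_roots.mp (IsAlgClosed.splits q))
  have hfact : C c * (s.map (fun a => X - C a)).prod = q := by
    rw [← hqlc]
    exact C_leadingCoeff_mul_prod_multiset_X_sub_C (by rw [← hs, hcard, hqdeg])
  have hA : Apoly s = C c⁻¹ * q.reverse := by
    have h1 : q.reverse = C c * Apoly s := by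
      conv_lhs => rw [← hfact]
      rw [reverse_mul_of_domain, reverse_C, reverse_prod_X_sub_C]
    rw [h1, ← mul_assoc, ← C_mul, inv_mul_cancel₀ hcne, C_1, one_mul]
  have hAcoeff : ∀ i, i ≤ D → (Apoly s).coeff i = c⁻¹ * q.coeff (D - i) := by
    intro i hi
    rw [hA, coeff_C_mul, coeff_reverse, hqdeg, revAt_le hi]
  have hA0 : (Apoly s).coeff 0 = 1 := by
    rw [hAcoeff 0 (by omega), Nat.sub_zero, hqc D (by omega)]
    have : f.coeff D = c := by rw [hc, leadingCoeff, hDdef]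
    rw [this, inv_mul_cancel₀ hcne]
  have hAodd : ∀ i, Odd i → i < D - 1 → (Apoly s).coeff i = 0 := by
    intro i hi hilt
    rw [hAcoeff i (by omega), hqc (D - i) (by omega),
      hodd (D - i) (Nat.Even.sub_odd (by omega) hDeven hi), mul_zero]
  have hAD1 : (Apoly s).coeff (D - 1) = -c⁻¹ := by
    rw [hAcoeff (D - 1) (by omega)]
    have h1 : D - (D - 1) = 1 := by omega
    rw [h1, hq1]
    ring
  -- power sums
  have hps : ∀ k, Odd k → k ≤ D - 1 → psum s k = if k = D - 1 then ((D : ℂ) - 1) / c else 0 := by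
    intro k
    induction k using Nat.strong_induction_on with
    | _ k ih =>
      intro hkodd hkle
      have hk1 : 1 ≤ k := hkodd.pos
      have hnewton := newton s k hk1
      obtain ⟨k', rfl⟩ : ∃ k', k = k' + 1 := ⟨k - 1, by omega⟩
      rw [Finset.sum_range_succ'] at hnewton
      have hzero : ∑ i ∈ Finset.range k',
          (Apoly s).coeff (i + 1) * psum s (k' + 1 - (i + 1)) = 0 := by
        apply Finset.sum_eq_zero
        intro i hi
        have hik := Finset.mem_range.mp hi
        rcases Nat.even_or_odd (i + 1) with he | ho
        · have hlt : k' + 1 - (i + 1) < k' + 1 := by omega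
          have hodd' : Odd (k' + 1 - (i + 1)) := Nat.Odd.sub_even (by omega) hkodd he
          rw [ih _ hlt hodd' (by omega), if_neg (by omega), mul_zero]
        · rw [hAodd (i + 1) ho (by omega), zero_mul]
      rw [hzero, zero_add, hA0, one_mul, Nat.sub_zero] at hnewton
      -- after sum_range_succ' the last term is coeff 0 * psum (k - 0)
      rcases eq_or_ne (k' + 1) (D - 1) with heq | hne
      · rw [if_pos heq]
        rw [heq, hAD1] at hnewton
        have hcast : ((D - 1 : ℕ) : ℂ) = (D : ℂ) - 1 := by
          rw [Nat.cast_sub (by omega)]; norm_num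
        rw [hcast] at hnewton
        have hps1 : psum s (D - 1) = ((D : ℂ) - 1) * c⁻¹ := by linear_combination hnewton
        rw [heq, hps1, div_eq_mul_inv]
      · rw [if_neg hne]
        rw [hAodd (k' + 1) hkodd (by omega)] at hnewton
        linear_combination hnewton
  -- final computation
  have hdlt : f.derivative.natDegree < D := natDegree_derivative_lt (by omega)
  have hevalsum : ((q.roots).map (fun r => f.derivative.eval r)).sum
      = ∑ j ∈ Finset.range D, f.derivative.coeff j * psum s j := by
    rw [← hs]
    calc (s.map (fun r => f.derivative.eval r)).sum
        = (s.map (fun r => ∑ j ∈ Finset.range D, f.derivative.coeff j * r ^ j)).sum := by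
          congr 1
          apply Multiset.map_congr rfl
          intro r _
          exact eval_eq_sum_range' hdlt r
      _ = ∑ j ∈ Finset.range D, (s.map (fun r => f.derivative.coeff j * r ^ j)).sum :=
          multiset_sum_finset_sum s (Finset.range D) _
      _ = ∑ j ∈ Finset.range D, f.derivative.coeff j * psum s j := by
          apply Finset.sum_congr rfl
          intro j _
          exact Multiset.sum_map_mul_left
  show ((q.roots).map (fun r => f.derivative.eval r)).sum = (D : ℂ) * ((D : ℂ) - 1)
  rw [hevalsum]
  rw [Finset.sum_eq_single_of_mem (D - 1) (Finset.mem_range.mpr (by omega))]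
  · rw [coeff_derivative]
    have h1 : D - 1 + 1 = D := by omega
    rw [h1]
    rw [hps (D - 1) (Nat.Even.sub_odd (by omega) hDeven odd_one) le_rfl, if_pos rfl]
    have h2 : f.coeff D = c := by rw [hc, leadingCoeff, hDdef]
    rw [h2]
    rw [Nat.cast_sub (by omega : 1 ≤ D)]
    push_cast
    field_simp
    ring
  · intro j hj hne
    have hjD := Finset.mem_range.mp hj
    rcases Nat.even_or_odd j with he | ho
    · rw [coeff_derivative, hodd (j + 1) (Even.add_one he), zero_mul, zero_mul]
    · rw [hps j ho (by omega), if_neg (by omega), mul_zero]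

end Stmt12Aux

open Stmt12Aux

theorem stmt_12 (p : Polynomial ℂ) (hp : p.natDegree = 2) :
    (∀ n : ℕ, 1 ≤ n →
      ((polyIter p n - Polynomial.X).roots.map
        (fun z => ∏ k ∈ Finset.range n,
          p.derivative.eval ((fun w => p.eval w)^[k] z))).sum
      = (2 : ℂ) ^ n * ((2 : ℂ) ^ n - 1)) ∧
    ((p - Polynomial.X).roots.map (fun z => p.derivative.eval z)).sum = 2 := by
  have hp0 : p ≠ 0 := fun h => by simp [h] at hp
  have ha : p.coeff 2 ≠ 0 := by
    rw [← hp]; exact leadingCoeff_ne_zero.mpr hp0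
  set a := p.coeff 2 with hadef
  set b := p.coeff 1 with hbdef
  set c0 := p.coeff 0 with hc0def
  have hpe : p = C a * X ^ 2 + C b * X + C c0 := by
    ext j
    rcases j with _ | _ | _ | j
    · simp [hadef, hbdef, hc0def, coeff_add, coeff_C_mul, coeff_X_pow, coeff_C, coeff_X]
    · simp [hadef, hbdef, hc0def, coeff_add, coeff_C_mul, coeff_X_pow, coeff_C, coeff_X]
    · simp [hadef, hbdef, hc0def, coeff_add, coeff_C_mul, coeff_X_pow, coeff_C, coeff_X]
    · have h0 : p.coeff (j + 3) = 0 := coeff_eq_zero_of_natDegree_lt (by rw [hp]; omega)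
      simp [h0, coeff_add, coeff_C_mul, coeff_X_pow, coeff_C, coeff_X]
  set m : ℂ := -b / (2 * a) with hmdef
  have hm : 2 * a * m + b = 0 := by
    rw [hmdef]; field_simp; ring
  set P : ℂ[X] := p.comp (X + C m) - C m with hPdef
  have hPdeg : P.natDegree = 2 := by
    rw [hPdef, natDegree_sub_C, natDegree_comp, hp, natDegree_X_add_C, mul_one]
  have hPsym : P.comp (-X) = P := by
    apply Polynomial.funext
    intro z
    rw [eval_comp]
    simp only [hPdef, eval_comp, eval_sub, eval_add, eval_neg, eval_X, eval_C]
    rw [hpe]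
    simp only [eval_add, eval_mul, eval_pow, eval_C, eval_X]
    linear_combination (-2 : ℂ) * z * hm
  have hiter : ∀ k, polyIter P k = (polyIter p k).comp (X + C m) - C m := by
    intro k
    induction k with
    | zero =>
        show (X : ℂ[X]) = X.comp (X + C m) - C m
        rw [X_comp]; ring
    | succ k ih =>
        rw [polyIter_succ, polyIter_succ, ih, sub_comp, C_comp, comp_assoc, comp_assoc]
        congr 2
        rw [add_comp, X_comp, C_comp, hPdef, sub_add_cancel]
  have main : ∀ n : ℕ, 1 ≤ n →
      ((polyIter p n - Polynomial.X).roots.map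
        (fun z => ∏ k ∈ Finset.range n,
          p.derivative.eval ((fun w => p.eval w)^[k] z))).sum
      = (2 : ℂ) ^ n * ((2 : ℂ) ^ n - 1) := by
    intro n hn
    have hfun : ∀ z : ℂ, (∏ k ∈ Finset.range n,
        p.derivative.eval ((fun w => p.eval w)^[k] z)) = (polyIter p n).derivative.eval z := by
      intro z
      rw [polyIter_deriv_eval]
      apply Finset.prod_congr rfl
      intro k _
      rw [polyIter_eval]
    rw [Multiset.map_congr rfl (fun z _ => hfun z)]
    set f := polyIter p n with hfdef
    set F := polyIter P n with hFdef
    have hfdeg : f.natDegree = 2 ^ n := polyIter_natDegree p hp n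
    have hFdeg2 : F.natDegree = 2 ^ n := polyIter_natDegree P hPdeg n
    have h2n : 2 ≤ 2 ^ n := by
      calc 2 = 2 ^ 1 := rfl
        _ ≤ 2 ^ n := Nat.pow_le_pow_right (by norm_num) hn
    have hFeven : F.comp (-X) = F := by
      obtain ⟨k, rfl⟩ : ∃ k, n = k + 1 := ⟨n - 1, by omega⟩
      show ((polyIter P k).comp P).comp (-X) = (polyIter P k).comp P
      rw [comp_assoc, hPsym]
    -- q facts
    set q := f - X with hqdef
    have hqdeg : q.natDegree = 2 ^ n := by
      rw [hqdef]
      rw [natDegree_sub_eq_left_of_natDegree_lt (by rw [natDegree_X, hfdeg]; omega), hfdeg]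
    have hq0 : q ≠ 0 := fun h => by rw [h, natDegree_zero] at hqdeg; omega
    have hcard : Multiset.card q.roots = q.natDegree :=
      splits_iff_card_roots.mp (IsAlgClosed.splits q)
    have hfact := C_leadingCoeff_mul_prod_multiset_X_sub_C hcard
    have hQ : F - X = q.comp (X + C m) := by
      rw [hFdef, hiter n, ← hfdef, hqdef, sub_comp, X_comp]
      ring
    have hroots : (F - X).roots = q.roots.map (fun r => r - m) := by
      rw [hQ]
      conv_lhs => rw [← hfact]
      rw [mul_comp, C_comp, multiset_prod_comp, Multiset.map_map]
      have hlc : q.leadingCoeff ≠ 0 := leadingCoeff_ne_zero.mpr hq0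
      have hmapeq : Multiset.map ((fun pp => pp.comp (X + C m)) ∘ fun a => X - C a) q.roots
          = Multiset.map (fun a => X - C a) (q.roots.map (fun r => r - m)) := by
        rw [Multiset.map_map]
        apply Multiset.map_congr rfl
        intro r _
        simp only [Function.comp_apply]
        rw [sub_comp, X_comp, C_comp, map_sub]
        ring
      rw [hmapeq, roots_C_mul _ hlc, roots_multiset_prod_X_sub_C]
    have hFd : F.derivative = f.derivative.comp (X + C m) := by
      rw [hFdef, hiter n, ← hfdef, derivative_sub, derivative_C, sub_zero, derivative_comp]
      simp
    have hsum : ((f - X).roots.map (fun z => f.derivative.eval z)).sum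
        = ((F - X).roots.map (fun z => F.derivative.eval z)).sum := by
      rw [hroots, ← hqdef, Multiset.map_map]
      congr 1
      apply Multiset.map_congr rfl
      intro r _
      simp only [Function.comp_apply, hFd, eval_comp, eval_add, eval_X, eval_C]
      rw [sub_add_cancel]
    rw [hsum]
    have := even_main F hFeven (by rw [hFdeg2]; exact h2n)
    rw [this, hFdeg2]
    push_cast
    ring
  refine ⟨main, ?_⟩
  have h1 := main 1 le_rfl
  have hp1 : polyIter p 1 = p := by
    show X.comp p = p
    rw [X_comp]
  rw [hp1] at h1
  have hfun1 : ∀ z ∈ (p - Polynomial.X).roots,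
      (∏ k ∈ Finset.range 1, p.derivative.eval ((fun w => p.eval w)^[k] z))
        = p.derivative.eval z := by
    intro z _
    rw [Finset.prod_range_one]
    simp
  rw [Multiset.map_congr rfl hfun1] at h1
  rw [h1]
  norm_num
end
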